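/- For b ∈ C(X_A,ℤ) set 1_b = 1 − b + b∘σ_A ∈ C(X_A,ℤ). Then the coboundary subgroup Γ_A^b = {τ ∈ Γ_A : d_τ(x) = b(x) − b(τ(x)) for all x} coincides with the cocycle subgroup Γ_{A,1_b} = {τ : ρ^{1_b}(x,τ) = 0 for all x}. In particular Γ_A^b is a subgroup of Γ_A, and Γ_A^{m+b} = Γ_A^b for any integer m. -/

import Mathlib

/-- Partial sum `f^m(x) = ∑_{i=0}^{m-1} f(σ^i x)`. -/
def pSum {X : Type*} (σ : X → X) (f : X → ℤ) (m : ℕ) (x : X) : ℤ :=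
  ∑ i ∈ Finset.range m, f (σ^[i] x)

/-- Membership in the cocycle subgroup `Γ_{A,f}`. -/
def memCocycleSubgroup {X : Type*} [TopologicalSpace X] (σ : X → X) (f : X → ℤ)
    (τ : Equiv.Perm X) : Prop :=
  Continuous τ ∧ Continuous τ.symm ∧
    ∃ k l : X → ℕ, Continuous k ∧ Continuous l ∧
      (∀ x, σ^[k x] (τ x) = σ^[l x] x) ∧
      ∀ x, pSum σ f (l x) x = pSum σ f (k x) (τ x)

/-- Membership in the coboundary subgroup `Γ_A^b`: `τ ∈ Γ_A` with
`d_τ(x) = b(x) − b(τ(x))` for all `x`. -/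
def memCoboundarySubgroup {X : Type*} [TopologicalSpace X] (σ : X → X) (b : X → ℤ)
    (τ : Equiv.Perm X) : Prop :=
  Continuous τ ∧ Continuous τ.symm ∧
    ∃ k l : X → ℕ, Continuous k ∧ Continuous l ∧
      (∀ x, σ^[k x] (τ x) = σ^[l x] x) ∧
      ∀ x, (l x : ℤ) - (k x : ℤ) = b x - b (τ x)

/-- Telescoping: the partial sums of `1 - b + b∘σ`. -/
lemma pSum_one_sub (X : Type*) (σ : X → X) (b : X → ℤ) (m : ℕ) (x : X) :
    pSum σ (fun x => 1 - b x + b (σ x)) m x = (m : ℤ) - b x + b (σ^[m] x) := by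
  induction m with
  | zero => simp [pSum]
  | succ n ih =>
      rw [show pSum σ (fun x => 1 - b x + b (σ x)) (n+1) x =
        pSum σ (fun x => 1 - b x + b (σ x)) n x + (1 - b (σ^[n] x) + b (σ (σ^[n] x))) from
        Finset.sum_range_succ _ n, ih, Function.iterate_succ_apply']
      push_cast
      ring

theorem coboundarySubgroup_eq_cocycleSubgroup {X : Type*} [TopologicalSpace X]
    (σ : X → X) (b : X → ℤ) (hb : Continuous b) :
    ({ τ | memCoboundarySubgroup σ b τ } =
      { τ | memCocycleSubgroup σ (fun x => 1 - b x + b (σ x)) τ }) ∧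
    (∃ G : Subgroup (Equiv.Perm X), ↑G = { τ | memCoboundarySubgroup σ b τ }) ∧
    (∀ m : ℤ, { τ | memCoboundarySubgroup σ (fun x => m + b x) τ } =
      { τ | memCoboundarySubgroup σ b τ }) := by
  refine ⟨?_, ?_, ?_⟩
  · ext τ
    simp only [Set.mem_setOf_eq, memCoboundarySubgroup, memCocycleSubgroup]
    refine and_congr_right fun _ => and_congr_right fun _ => ?_
    refine exists_congr fun k => exists_congr fun l =>
      and_congr_right fun _ => and_congr_right fun _ => and_congr_right fun hkl => ?_
    refine forall_congr' fun x => ?_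
    rw [pSum_one_sub, pSum_one_sub, hkl x]
    constructor <;> intro h <;> linarith
  · refine ⟨{ carrier := { τ | memCoboundarySubgroup σ b τ }
              mul_mem' := ?_
              one_mem' := ?_
              inv_mem' := ?_ }, rfl⟩
    swap
    · exact ⟨continuous_id, continuous_id,
        fun _ => 0, fun _ => 0, continuous_const, continuous_const,
        fun x => rfl, fun x => by simp⟩
    · rintro τ₁ τ₂ ⟨hc₁, hc₁', k₁, l₁, hk₁, hl₁, h₁, hb₁⟩ ⟨hc₂, hc₂', k₂, l₂, hk₂, hl₂, h₂, hb₂⟩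
      refine ⟨hc₁.comp hc₂, hc₂'.comp hc₁',
        fun x => k₁ (τ₂ x) + k₂ x, fun x => l₁ (τ₂ x) + l₂ x,
        (hk₁.comp hc₂).add hk₂, (hl₁.comp hc₂).add hl₂, fun x => ?_, fun x => ?_⟩
      · have := congrArg (σ^[k₂ x]) (h₁ (τ₂ x))
        rw [← Function.iterate_add_apply, ← Function.iterate_add_apply] at this
        show σ^[k₁ (τ₂ x) + k₂ x] (τ₁ (τ₂ x)) = σ^[l₁ (τ₂ x) + l₂ x] x
        rw [Nat.add_comm (k₁ (τ₂ x)) (k₂ x), this,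
          Nat.add_comm (k₂ x) (l₁ (τ₂ x)), Function.iterate_add_apply, h₂ x,
          ← Function.iterate_add_apply, Nat.add_comm]
      · have e₁ := hb₁ (τ₂ x)
        have e₂ := hb₂ x
        show ((l₁ (τ₂ x) + l₂ x : ℕ) : ℤ) - ((k₁ (τ₂ x) + k₂ x : ℕ) : ℤ) = b x - b (τ₁ (τ₂ x))
        push_cast
        linarith
    · rintro τ ⟨hc, hc', k, l, hk, hl, h, hbb⟩
      refine ⟨hc', by simpa [Equiv.Perm.inv_def] using hc, fun x => l (τ.symm x), fun x => k (τ.symm x),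
        hl.comp hc', hk.comp hc', fun x => ?_, fun x => ?_⟩
      · have := h (τ.symm x)
        rw [Equiv.apply_symm_apply] at this
        simpa using this.symm
      · have := hbb (τ.symm x)
        rw [Equiv.apply_symm_apply] at this
        simp only [Equiv.Perm.inv_def]
        linarith
  · intro m
    ext τ
    simp only [Set.mem_setOf_eq, memCoboundarySubgroup]
    refine and_congr_right fun _ => and_congr_right fun _ =>
      exists_congr fun k => exists_congr fun l =>
      and_congr_right fun _ => and_congr_right fun _ => and_congr_right fun _ =>
      forall_congr' fun x => ?_
    constructor <;> intro h <;> linarith
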